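/- arXiv:2102.13025 — 2 statements merged into one kernel-verified Lean document; each statement's English description precedes it below -/
import Mathlib

section
/- Let X be an X-valued random variable (principal variate), Û a U-valued random variable (control variate), and U an ancillary U-valued random variable uncorrelated with X and Û satisfying E[U] = E[Û]. For the total variate Z = X - S(Û - U), the linear gain S minimizing the trace of the covariance of Z is S = Cov(X, Û) (Cov(Û, Û) + Cov(U, U))^{-1}. -/
open MeasureTheory Matrix

/-- Component-wise mean of a random vector. -/
noncomputable def rmean {Ω : Type*} [MeasureSpace Ω] {ι : Type*}
    (X : Ω → ι → ℝ) : ι → ℝ := fun i => ∫ ω, X ω i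

/-- Covariance matrix of two random vectors. -/
noncomputable def rcov {Ω : Type*} [MeasureSpace Ω] {ι κ : Type*}
    (X : Ω → ι → ℝ) (Y : Ω → κ → ℝ) : Matrix ι κ ℝ :=
  Matrix.of fun i j => ∫ ω, (X ω i - rmean X i) * (Y ω j - rmean Y j)

section Aux

variable {Ω : Type*} [MeasureSpace Ω] [IsProbabilityMeasure (volume : Measure Ω)]

/-- Scalar covariance of two real random variables. -/
noncomputable def scov (f g : Ω → ℝ) : ℝ :=
  ∫ ω, (f ω - ∫ ω', f ω') * (g ω - ∫ ω', g ω')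

omit [IsProbabilityMeasure (volume : Measure Ω)] in
lemma memL2_mul_integrable {f g : Ω → ℝ} (hf : MemLp f 2) (hg : MemLp g 2) :
    Integrable (fun ω => f ω * g ω) := by
  have h1 := (hf.add hg).integrable_sq
  have h2 := hf.integrable_sq
  have h3 := hg.integrable_sq
  have : (fun ω => f ω * g ω)
      = fun ω => (((f ω + g ω) ^ 2 - f ω ^ 2) - g ω ^ 2) / 2 := by
    funext ω; ring
  rw [this]
  exact ((h1.sub h2).sub h3).div_const 2

lemma centered_mul_integrable {f g : Ω → ℝ} (hf : MemLp f 2) (hg : MemLp g 2) (a b : ℝ) :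
    Integrable (fun ω => (f ω - a) * (g ω - b)) :=
  memL2_mul_integrable (hf.sub (memLp_const a)) (hg.sub (memLp_const b))

omit [IsProbabilityMeasure (volume : Measure Ω)] in
lemma scov_comm {f g : Ω → ℝ} : scov f g = scov g f := by
  unfold scov; congr 1; funext ω; ring

omit [IsProbabilityMeasure (volume : Measure Ω)] in
lemma scov_self_nonneg {f : Ω → ℝ} : 0 ≤ scov f f :=
  integral_nonneg fun ω => mul_self_nonneg _

/-- Covariance of linear combinations of `L²` random variables. -/
lemma scov_linc {ι κ : Type*} [Fintype ι] [Fintype κ]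
    (f : ι → Ω → ℝ) (g : κ → Ω → ℝ) (c : ι → ℝ) (d : κ → ℝ)
    (hf : ∀ i, MemLp (f i) 2) (hg : ∀ j, MemLp (g j) 2) :
    scov (fun ω => ∑ i, c i * f i ω) (fun ω => ∑ j, d j * g j ω)
      = ∑ i, ∑ j, c i * d j * scov (f i) (g j) := by
  have hfi : ∀ i, Integrable (f i) := fun i => (hf i).integrable one_le_two
  have hgi : ∀ j, Integrable (g j) := fun j => (hg j).integrable one_le_two
  have hmf : (∫ ω, ∑ i, c i * f i ω) = ∑ i, c i * ∫ ω, f i ω := by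
    rw [integral_finset_sum _ (fun i _ => (hfi i).const_mul (c i))]
    simp [integral_const_mul]
  have hmg : (∫ ω, ∑ j, d j * g j ω) = ∑ j, d j * ∫ ω, g j ω := by
    rw [integral_finset_sum _ (fun j _ => (hgi j).const_mul (d j))]
    simp [integral_const_mul]
  unfold scov
  rw [hmf, hmg]
  have hpt : ∀ ω, ((∑ i, c i * f i ω) - ∑ i, c i * ∫ ω', f i ω')
        * ((∑ j, d j * g j ω) - ∑ j, d j * ∫ ω', g j ω')
      = ∑ i, ∑ j, c i * d j *
          ((f i ω - ∫ ω', f i ω') * (g j ω - ∫ ω', g j ω')) := by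
    intro ω
    rw [← Finset.sum_sub_distrib, ← Finset.sum_sub_distrib, Finset.sum_mul_sum]
    apply Finset.sum_congr rfl; intro i _
    apply Finset.sum_congr rfl; intro j _
    ring
  simp only [hpt]
  rw [integral_finset_sum]
  · apply Finset.sum_congr rfl; intro i _
    rw [integral_finset_sum]
    · apply Finset.sum_congr rfl; intro j _
      rw [integral_const_mul]
    · intro j _
      exact ((centered_mul_integrable (hf i) (hg j) _ _).const_mul _)
  · intro i _
    exact integrable_finset_sum _ fun j _ =>
      ((centered_mul_integrable (hf i) (hg j) _ _).const_mul _)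

lemma scov_sub_left {f f' g : Ω → ℝ} (hf : MemLp f 2) (hf' : MemLp f' 2) (hg : MemLp g 2) :
    scov (fun ω => f ω - f' ω) g = scov f g - scov f' g := by
  have hm : (∫ ω, (f ω - f' ω)) = (∫ ω, f ω) - ∫ ω, f' ω :=
    integral_sub (hf.integrable one_le_two) (hf'.integrable one_le_two)
  unfold scov
  rw [hm]
  have hpt : ∀ ω, (f ω - f' ω - ((∫ ω', f ω') - ∫ ω', f' ω')) * (g ω - ∫ ω', g ω')
      = (f ω - ∫ ω', f ω') * (g ω - ∫ ω', g ω')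
        - (f' ω - ∫ ω', f' ω') * (g ω - ∫ ω', g ω') := fun ω => by ring
  simp only [hpt]
  exact integral_sub (centered_mul_integrable hf hg _ _) (centered_mul_integrable hf' hg _ _)

lemma scov_sub_right {f g g' : Ω → ℝ} (hf : MemLp f 2) (hg : MemLp g 2) (hg' : MemLp g' 2) :
    scov f (fun ω => g ω - g' ω) = scov f g - scov f g' := by
  rw [scov_comm, scov_sub_left hg hg' hf, scov_comm (f := g), scov_comm (f := g')]

/-- Expansion of the variance of `x - ∑ s j • W j`. -/
lemma scov_expand {r : ℕ} (x : Ω → ℝ) (W : Fin r → Ω → ℝ)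
    (hx : MemLp x 2) (hW : ∀ j, MemLp (W j) 2) (s : Fin r → ℝ) :
    scov (fun ω => x ω - ∑ j, s j * W j ω) (fun ω => x ω - ∑ j, s j * W j ω)
      = scov x x - 2 * ∑ j, s j * scov x (W j)
        + ∑ k, (∑ j, s j * scov (W j) (W k)) * s k := by
  classical
  set f : Unit ⊕ Fin r → Ω → ℝ := Sum.elim (fun _ ω => x ω) (fun j ω => W j ω) with hfdef
  set c : Unit ⊕ Fin r → ℝ := Sum.elim (fun _ => 1) (fun j => -(s j)) with hcdef
  have hf : ∀ p, MemLp (f p) 2 := by rintro (p | j); exacts [hx, hW j]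
  have hrw : (fun ω => x ω - ∑ j, s j * W j ω) = fun ω => ∑ p, c p * f p ω := by
    funext ω
    simp [hfdef, hcdef, Fintype.sum_sum_type, sub_eq_add_neg, Finset.sum_neg_distrib, neg_mul]
  rw [hrw, scov_linc f f c c hf hf]
  simp only [hcdef, hfdef, Fintype.sum_sum_type, Finset.univ_unique, Finset.sum_singleton,
    Sum.elim_inl, Sum.elim_inr, one_mul, mul_one, neg_mul, mul_neg, neg_neg]
  have h1 : ∀ y, scov (fun ω => W y ω) (fun ω => x ω) = scov (fun ω => x ω) (fun ω => W y ω) :=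
    fun y => scov_comm
  have h2 : ∑ k, (∑ j, s j * scov (W j) (W k)) * s k
      = ∑ y, ∑ z, s y * s z * scov (fun ω => W y ω) (fun ω => W z ω) := by
    simp only [Finset.sum_mul]
    rw [Finset.sum_comm]
    exact Finset.sum_congr rfl fun y _ => Finset.sum_congr rfl fun z _ => by ring
  simp only [h1]
  rw [Finset.sum_add_distrib, h2, Finset.sum_neg_distrib]
  have h3 : ∀ y, scov x (W y) = scov (fun ω => x ω) (fun ω => W y ω) := fun y => rfl
  have h4 : scov x x = scov (fun ω => x ω) (fun ω => x ω) := rfl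
  simp only [h3, h4]
  ring

/-- A quadratic form in covariances is nonnegative. -/
lemma scov_quad_nonneg {r : ℕ} (W : Fin r → Ω → ℝ) (hW : ∀ j, MemLp (W j) 2)
    (m : Fin r → ℝ) :
    0 ≤ ∑ k, (∑ j, m j * scov (W j) (W k)) * m k := by
  have h2 : ∑ k, (∑ j, m j * scov (W j) (W k)) * m k
      = ∑ y, ∑ z, m y * m z * scov (W y) (W z) := by
    simp only [Finset.sum_mul]
    rw [Finset.sum_comm]
    exact Finset.sum_congr rfl fun y _ => Finset.sum_congr rfl fun z _ => by ring
  rw [h2, ← scov_linc W W m m hW hW]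
  exact scov_self_nonneg

end Aux

/-- **Optimal gain (Lemma 1).** Among all gain matrices `S`, the total variate
`Z = X - S (Û - U)` has minimal trace of covariance for
`S = Cov(X,Û) (Cov(Û,Û) + Cov(U,U))⁻¹`. -/
theorem optimal_gain
    {Ω : Type*} [MeasureSpace Ω] [IsProbabilityMeasure (volume : Measure Ω)]
    {n r : ℕ}
    (X : Ω → Fin n → ℝ) (Uhat U : Ω → Fin r → ℝ)
    (hX : ∀ i, MemLp (fun ω => X ω i) 2) (hUhat : ∀ i, MemLp (fun ω => Uhat ω i) 2)
    (hU : ∀ i, MemLp (fun ω => U ω i) 2)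
    (hmean : rmean U = rmean Uhat)
    (huncorrX : rcov U X = 0) (huncorrUhat : rcov U Uhat = 0)
    (hinv : IsUnit (rcov Uhat Uhat + rcov U U))
    (Z : Matrix (Fin n) (Fin r) ℝ → Ω → Fin n → ℝ)
    (hZ : ∀ S ω, Z S ω = X ω - S.mulVec (Uhat ω - U ω)) :
    ∀ S : Matrix (Fin n) (Fin r) ℝ,
      (rcov (Z (rcov X Uhat * (rcov Uhat Uhat + rcov U U)⁻¹))
            (Z (rcov X Uhat * (rcov Uhat Uhat + rcov U U)⁻¹))).trace
        ≤ (rcov (Z S) (Z S)).trace := by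
  classical
  intro S
  set A : Matrix (Fin n) (Fin r) ℝ := rcov X Uhat with hAdef
  set B : Matrix (Fin r) (Fin r) ℝ := rcov Uhat Uhat + rcov U U with hBdef
  set W : Fin r → Ω → ℝ := fun j ω => Uhat ω j - U ω j with hWdef
  have hW : ∀ j, MemLp (W j) 2 := fun j => (hUhat j).sub (hU j)
  -- basic covariance identities
  have hUX0 : ∀ (j : Fin r) (i : Fin n),
      scov (fun ω => U ω j) (fun ω => X ω i) = 0 := by
    intro j i
    have h := congrFun (congrFun huncorrX j) i
    simpa [rcov, rmean, scov] using h
  have hUUhat0 : ∀ (j k : Fin r),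
      scov (fun ω => U ω j) (fun ω => Uhat ω k) = 0 := by
    intro j k
    have h := congrFun (congrFun huncorrUhat j) k
    simpa [rcov, rmean, scov] using h
  have hA : ∀ (i : Fin n) (j : Fin r), A i j = scov (fun ω => X ω i) (W j) := by
    intro i j
    have : scov (fun ω => X ω i) (fun ω => Uhat ω j - U ω j)
        = scov (fun ω => X ω i) (fun ω => Uhat ω j)
          - scov (fun ω => X ω i) (fun ω => U ω j) :=
      scov_sub_right (hX i) (hUhat j) (hU j)
    have hXU : scov (fun ω => X ω i) (fun ω => U ω j) = 0 := by
      rw [scov_comm]; exact hUX0 j i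
    rw [hAdef]
    show scov (fun ω => X ω i) (fun ω => Uhat ω j) = _
    rw [hWdef]
    simp only [this, hXU, sub_zero]
  have hB : ∀ (j k : Fin r), B j k = scov (W j) (W k) := by
    intro j k
    have h1 : scov (W j) (W k)
        = scov (W j) (fun ω => Uhat ω k) - scov (W j) (fun ω => U ω k) :=
      scov_sub_right (hW j) (hUhat k) (hU k)
    have h2 : scov (W j) (fun ω => Uhat ω k)
        = scov (fun ω => Uhat ω j) (fun ω => Uhat ω k)
          - scov (fun ω => U ω j) (fun ω => Uhat ω k) :=
      scov_sub_left (hUhat j) (hU j) (hUhat k)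
    have h3 : scov (W j) (fun ω => U ω k)
        = scov (fun ω => Uhat ω j) (fun ω => U ω k)
          - scov (fun ω => U ω j) (fun ω => U ω k) :=
      scov_sub_left (hUhat j) (hU j) (hU k)
    have h4 : scov (fun ω => Uhat ω j) (fun ω => U ω k) = 0 := by
      rw [scov_comm]; exact hUUhat0 k j
    have hBjk : B j k = scov (fun ω => Uhat ω j) (fun ω => Uhat ω k)
        + scov (fun ω => U ω j) (fun ω => U ω k) := rfl
    rw [hBjk, h1, h2, h3, h4, hUUhat0 j k]
    ring
  -- expansion of the trace of the covariance of the total variate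
  have hexp : ∀ S' : Matrix (Fin n) (Fin r) ℝ,
      (rcov (Z S') (Z S')).trace
        = (rcov X X).trace - 2 * (S' * Aᵀ).trace + (S' * B * S'ᵀ).trace := by
    intro S'
    have hZi : ∀ i, (fun ω => Z S' ω i) = fun ω => X ω i - ∑ j, S' i j * W j ω := by
      intro i
      funext ω
      rw [hZ]
      simp [Matrix.mulVec, dotProduct, hWdef]
    have key : ∀ i, rcov (Z S') (Z S') i i
        = rcov X X i i - 2 * (S' * Aᵀ) i i + (S' * B * S'ᵀ) i i := by
      intro i
      have lhs : rcov (Z S') (Z S') i i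
          = scov (fun ω => Z S' ω i) (fun ω => Z S' ω i) := rfl
      have hXX : rcov X X i i = scov (fun ω => X ω i) (fun ω => X ω i) := rfl
      have hSA : (S' * Aᵀ) i i = ∑ j, S' i j * scov (fun ω => X ω i) (W j) := by
        simp only [Matrix.mul_apply, Matrix.transpose_apply]
        exact Finset.sum_congr rfl fun j _ => by rw [hA i j]
      have hSBS : (S' * B * S'ᵀ) i i
          = ∑ k, (∑ j, S' i j * scov (W j) (W k)) * S' i k := by
        simp only [Matrix.mul_apply, Matrix.transpose_apply]
        refine Finset.sum_congr rfl fun k _ => ?_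
        congr 1
        exact Finset.sum_congr rfl fun j _ => by rw [hB j k]
      rw [lhs, hZi i, scov_expand (fun ω => X ω i) W (hX i) hW (fun j => S' i j),
        hXX, hSA, hSBS]
    simp only [Matrix.trace, Matrix.diag]
    rw [Finset.sum_congr rfl fun i _ => key i, Finset.sum_add_distrib,
      Finset.sum_sub_distrib, ← Finset.mul_sum]
  -- positive semidefiniteness of B
  have hpsd : ∀ M : Matrix (Fin n) (Fin r) ℝ, 0 ≤ (M * B * Mᵀ).trace := by
    intro M
    simp only [Matrix.trace, Matrix.diag]
    refine Finset.sum_nonneg fun i _ => ?_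
    have : (M * B * Mᵀ) i i = ∑ k, (∑ j, M i j * scov (W j) (W k)) * M i k := by
      simp only [Matrix.mul_apply, Matrix.transpose_apply]
      refine Finset.sum_congr rfl fun k _ => ?_
      congr 1
      exact Finset.sum_congr rfl fun j _ => by rw [hB j k]
    rw [this]
    exact scov_quad_nonneg W hW (fun j => M i j)
  -- matrix algebra
  have hdet : IsUnit B.det := (Matrix.isUnit_iff_isUnit_det B).mp hinv
  have hBsym : Bᵀ = B := by
    ext j k
    rw [Matrix.transpose_apply, hB j k, hB k j, scov_comm]
  have hBinvsym : B⁻¹ᵀ = B⁻¹ := by rw [Matrix.transpose_nonsing_inv, hBsym]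
  set Sstar : Matrix (Fin n) (Fin r) ℝ := A * B⁻¹ with hSstardef
  have e1 : Sstar * B = A := by
    rw [hSstardef, Matrix.mul_assoc, Matrix.nonsing_inv_mul B hdet, Matrix.mul_one]
  have e2 : B * Sstarᵀ = Aᵀ := by
    rw [hSstardef, Matrix.transpose_mul, hBinvsym, ← Matrix.mul_assoc,
      Matrix.mul_nonsing_inv B hdet, Matrix.one_mul]
  have hDexp : (S - Sstar) * B * (S - Sstar)ᵀ
      = S * B * Sᵀ - A * Sᵀ - (S * Aᵀ - A * Sstarᵀ) := by
    have h5 : (S - Sstar) * B = S * B - A := by rw [Matrix.sub_mul, e1]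
    have h6 : S * B * Sstarᵀ = S * Aᵀ := by rw [Matrix.mul_assoc, e2]
    rw [h5, Matrix.transpose_sub, Matrix.mul_sub, Matrix.sub_mul, Matrix.sub_mul, h6]
  have t1 : (A * Sᵀ).trace = (S * Aᵀ).trace := by
    rw [← Matrix.trace_transpose (A * Sᵀ), Matrix.transpose_mul, Matrix.transpose_transpose]
  have t2 : (A * Sstarᵀ).trace = (Sstar * Aᵀ).trace := by
    rw [← Matrix.trace_transpose (A * Sstarᵀ), Matrix.transpose_mul,
      Matrix.transpose_transpose]
  have e3 : (Sstar * B * Sstarᵀ).trace = (Sstar * Aᵀ).trace := by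
    rw [e1, t2]
  have hp := hpsd (S - Sstar)
  rw [hDexp] at hp
  rw [Matrix.trace_sub, Matrix.trace_sub, Matrix.trace_sub] at hp
  rw [hexp S, hexp Sstar, e3]
  linarith [hp, t1, t2]
end

section
/- Suppose Û = Θ X for a linear projection Θ, and Φ is a linear interpolation operator such that Cov(X - ΦÛ, Û) = 0 and Cov(Û,Û) = Cov(U,U), with U uncorrelated with X and Û and E[U]=E[Û]. Then the optimal gain for Z = X - S(Û - U) is S = (1/2)Φ. -/
open MeasureTheory Matrix

lemma aux_int_mul {Ω : Type*} [MeasureSpace Ω] {f g : Ω → ℝ}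
    (hf : MemLp f 2) (hg : MemLp g 2) : Integrable (fun ω => f ω * g ω) := by
  rw [← memLp_one_iff_integrable]
  have h := hg.smul (φ := f) hf (r := 1)
    (hpqr := ⟨by simp [ENNReal.inv_two_add_inv_two]⟩)
  exact h

/-- **Theorem 3.1 (optimal gain is half the interpolation operator).**
If `Û = ΘX`, the residual `X - ΦÛ` is uncorrelated with `Û`, and
`Cov(Û,Û) = Cov(U,U)`, then the optimal gain
`S = Cov(X,Û)(Cov(Û,Û)+Cov(U,U))⁻¹` equals `(1/2)Φ`. -/
theorem optimal_gain_half_interpolation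
    {Ω : Type*} [MeasureSpace Ω] [IsProbabilityMeasure (volume : Measure Ω)]
    {n r : ℕ} (X : Ω → Fin n → ℝ) (U : Ω → Fin r → ℝ)
    (Θ : Matrix (Fin r) (Fin n) ℝ) (Φ : Matrix (Fin n) (Fin r) ℝ)
    (Uhat : Ω → Fin r → ℝ) (hUhatdef : ∀ ω, Uhat ω = Θ.mulVec (X ω))
    (hX : ∀ i, MemLp (fun ω => X ω i) 2)
    (hU : ∀ i, MemLp (fun ω => U ω i) 2)
    (hmean : rmean U = rmean Uhat)
    (hUX : rcov U X = 0) (hUUhat : rcov U Uhat = 0)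
    (hcoveq : rcov Uhat Uhat = rcov U U)
    (hres : rcov (fun ω => X ω - Φ.mulVec (Uhat ω)) Uhat = 0)
    (hinv : IsUnit (rcov Uhat Uhat)) :
    rcov X Uhat * (rcov Uhat Uhat + rcov U U)⁻¹ = (1 / 2 : ℝ) • Φ := by
  -- Û entries are in L²
  have hUhat : ∀ i, MemLp (fun ω => Uhat ω i) 2 := by
    intro i
    have : (fun ω => Uhat ω i) = fun ω => ∑ k, Θ i k * X ω k := by
      funext ω; simp [hUhatdef ω, Matrix.mulVec, dotProduct]
    rw [this]
    exact memLp_finset_sum _ (fun k _ => (hX k).const_mul _)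
  -- centered entries are in L²
  have hXc : ∀ i, MemLp (fun ω => X ω i - rmean X i) 2 :=
    fun i => (hX i).sub (memLp_const _)
  have hUc : ∀ i, MemLp (fun ω => Uhat ω i - rmean Uhat i) 2 :=
    fun i => (hUhat i).sub (memLp_const _)
  have hintU : ∀ i, Integrable (fun ω => Uhat ω i) :=
    fun i => (hUhat i).integrable (by norm_num)
  -- mean of residual
  have hmres : ∀ i, rmean (fun ω => X ω - Φ.mulVec (Uhat ω)) i
      = rmean X i - ∑ k, Φ i k * rmean Uhat k := by
    intro i
    have h1 : Integrable (fun ω => ∑ k, Φ i k * Uhat ω k) :=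
      integrable_finset_sum _ (fun k _ => (hintU k).const_mul _)
    calc rmean (fun ω => X ω - Φ.mulVec (Uhat ω)) i
        = ∫ ω, (X ω i - ∑ k, Φ i k * Uhat ω k) := by
          simp [rmean, Matrix.mulVec, dotProduct]
      _ = (∫ ω, X ω i) - ∫ ω, ∑ k, Φ i k * Uhat ω k :=
          integral_sub ((hX i).integrable (by norm_num)) h1
      _ = rmean X i - ∑ k, Φ i k * rmean Uhat k := by
          rw [integral_finset_sum _ (fun k _ => (hintU k).const_mul _)]
          simp [rmean, integral_const_mul]
  -- key identity: rcov X Uhat = Φ * rcov Uhat Uhat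
  have key : rcov X Uhat = Φ * rcov Uhat Uhat := by
    have := hres
    ext i j
    have h0 : (rcov (fun ω => X ω - Φ.mulVec (Uhat ω)) Uhat) i j = 0 := by
      rw [hres]; rfl
    have hexp : (rcov (fun ω => X ω - Φ.mulVec (Uhat ω)) Uhat) i j
        = rcov X Uhat i j - ∑ k, Φ i k * rcov Uhat Uhat k j := by
      show (∫ ω, ((fun ω => X ω - Φ.mulVec (Uhat ω)) ω i
          - rmean (fun ω => X ω - Φ.mulVec (Uhat ω)) i) * (Uhat ω j - rmean Uhat j)) = _
      have heq : ∀ ω, ((fun ω => X ω - Φ.mulVec (Uhat ω)) ω i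
          - rmean (fun ω => X ω - Φ.mulVec (Uhat ω)) i) * (Uhat ω j - rmean Uhat j)
          = (X ω i - rmean X i) * (Uhat ω j - rmean Uhat j)
            - ∑ k, Φ i k * ((Uhat ω k - rmean Uhat k) * (Uhat ω j - rmean Uhat j)) := by
        intro ω
        rw [hmres i]
        have e1 : ((X ω - Φ.mulVec (Uhat ω)) i - (rmean X i - ∑ k, Φ i k * rmean Uhat k))
            = (X ω i - rmean X i) - ∑ k, Φ i k * (Uhat ω k - rmean Uhat k) := by
          simp only [Pi.sub_apply, Matrix.mulVec, dotProduct, mul_sub,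
            Finset.sum_sub_distrib]
          ring
        rw [e1, sub_mul, Finset.sum_mul]
        congr 1
        exact Finset.sum_congr rfl fun k _ => by ring
      simp only [heq]
      rw [integral_sub (aux_int_mul (hXc i) (hUc j))
        (integrable_finset_sum _ (fun k _ => ((aux_int_mul (hUc k) (hUc j)).const_mul _)))]
      rw [integral_finset_sum _ (fun k _ => ((aux_int_mul (hUc k) (hUc j)).const_mul _))]
      simp only [integral_const_mul]
      rfl
    have : rcov X Uhat i j - ∑ k, Φ i k * rcov Uhat Uhat k j = 0 := hexp ▸ h0
    have := sub_eq_zero.mp this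
    rw [Matrix.mul_apply]
    exact this
  -- algebra
  set C := rcov Uhat Uhat with hC
  have hdet : IsUnit C.det := (Matrix.isUnit_iff_isUnit_det C).mp hinv
  have hCinv : C * C⁻¹ = 1 := Matrix.mul_nonsing_inv C hdet
  have hsum : (C + rcov U U)⁻¹ = (1 / 2 : ℝ) • C⁻¹ := by
    rw [← hcoveq]
    apply Matrix.inv_eq_right_inv
    rw [Matrix.mul_smul, Matrix.add_mul]
    simp only [hCinv]
    rw [← two_smul ℝ, smul_smul]
    norm_num
  rw [key, hsum, Matrix.mul_smul, Matrix.mul_assoc, hCinv, Matrix.mul_one]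
end
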